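/- Let K, P ≥ 1 and let f be a partition of the K trees {0,…,K−1} among P processes, i.e. f(p) ⊆ {0,…,K−1} for each p ∈ {0,…,P−1} with ⋃_p f(p) = {0,…,K−1}. Then f is a valid partition (induced by an SFC partition of a forest) if and only if the following three properties hold: (i) each nonempty f(p) is the interval of consecutive integers {k_p, k_p+1, …, K_p}; (ii) if p < q and f(p), f(q) are both nonempty, then K_p ≤ k_q; (iii) for p ≠ q, f(p) ∩ f(q) ⊆ {k_p, K_p}. -/

import Mathlib

/-- A partition `f` of the trees `{0,…,K-1}` among processes `{0,…,P-1}` is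
valid if it is induced by an SFC partition of a forest: there are `N ≥ 1`
leaves in SFC order, a monotone surjection `t` assigning each leaf its tree
and a monotone map `pr` assigning each leaf its process, with
`f p = t(pr⁻¹({p}))`. -/
def ValidPartition (K P : ℕ) (f : Fin P → Finset (Fin K)) : Prop :=
  ∃ N : ℕ, 1 ≤ N ∧ ∃ t : Fin N → Fin K, ∃ pr : Fin N → Fin P,
    Monotone t ∧ Function.Surjective t ∧ Monotone pr ∧
    ∀ p : Fin P, f p = (Finset.univ.filter fun i => pr i = p).image t

private theorem validPartition_iff_aux' (K P : ℕ) (hK : 1 ≤ K) (hP : 1 ≤ P)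
    (f : Fin P → Finset (Fin K)) (hcov : ∀ k : Fin K, ∃ p, k ∈ f p) :
    (∃ N : ℕ, 1 ≤ N ∧ ∃ t : Fin N → Fin K, ∃ pr : Fin N → Fin P,
    Monotone t ∧ Function.Surjective t ∧ Monotone pr ∧
    ∀ p : Fin P, f p = (Finset.univ.filter fun i => pr i = p).image t) ↔
      ((∀ p (h : (f p).Nonempty),
          f p = Finset.Icc ((f p).min' h) ((f p).max' h)) ∧
       (∀ p q (hp : (f p).Nonempty) (hq : (f q).Nonempty),
          p < q → (f p).max' hp ≤ (f q).min' hq) ∧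
       (∀ p q : Fin P, p ≠ q → ∀ k (hk : k ∈ f p), k ∈ f q →
          k = (f p).min' ⟨k, hk⟩ ∨ k = (f p).max' ⟨k, hk⟩)) := by
  constructor
  · rintro ⟨N, hN, t, pr, ht, hts, hpr, hf⟩
    have hmem : ∀ p (k : Fin K), k ∈ f p ↔ ∃ i, pr i = p ∧ t i = k := by
      intro p k
      rw [hf p]
      simp [Finset.mem_image, Finset.mem_filter]
    -- key lemma
    have A : ∀ p q : Fin P, p < q → ∀ a ∈ f p, ∀ b ∈ f q, a ≤ b := by
      intro p q hpq a ha b hb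
      obtain ⟨i, hip, hia⟩ := (hmem p a).1 ha
      obtain ⟨j, hjq, hjb⟩ := (hmem q b).1 hb
      have hij : i ≤ j := by
        by_contra h
        push_neg at h
        have := hpr h.le
        rw [hjq, hip] at this
        exact absurd hpq (not_lt.2 this)
      rw [← hia, ← hjb]
      exact ht hij
    refine ⟨?_, ?_, ?_⟩
    · intro p h
      apply Finset.Subset.antisymm
      · intro x hx
        exact Finset.mem_Icc.2 ⟨Finset.min'_le _ _ hx, Finset.le_max' _ _ hx⟩
      · intro c hc
        rw [Finset.mem_Icc] at hc
        obtain ⟨i1, hi1p, hi1⟩ := (hmem p _).1 ((f p).min'_mem h)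
        obtain ⟨i2, hi2p, hi2⟩ := (hmem p _).1 ((f p).max'_mem h)
        obtain ⟨j, hj⟩ := hts c
        rcases lt_or_ge j i1 with hj1 | hj1
        · have : c ≤ (f p).min' h := by rw [← hj, ← hi1]; exact ht hj1.le
          have hceq : c = (f p).min' h := le_antisymm this hc.1
          rw [hceq]; exact (f p).min'_mem h
        rcases lt_or_ge i2 j with hj2 | hj2
        · have : (f p).max' h ≤ c := by rw [← hj, ← hi2]; exact ht hj2.le
          have hceq : c = (f p).max' h := le_antisymm hc.2 this
          rw [hceq]; exact (f p).max'_mem h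
        · have h1 := hpr hj1
          have h2 := hpr hj2
          rw [hi1p] at h1; rw [hi2p] at h2
          exact (hmem p c).2 ⟨j, le_antisymm h2 h1, hj⟩
    · intro p q hp hq hpq
      exact A p q hpq _ ((f p).max'_mem hp) _ ((f q).min'_mem hq)
    · intro p q hpq k hk hkq
      rcases lt_or_gt_of_ne hpq with h | h
      · right
        refine le_antisymm (Finset.le_max' _ _ hk) ?_
        exact Finset.max'_le _ _ _ fun a ha => A p q h a ha k hkq
      · left
        refine le_antisymm ?_ (Finset.min'_le _ _ hk)
        exact Finset.le_min' _ _ _ fun a ha => A q p h k hkq a ha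
  · rintro ⟨hi, hii, hiii⟩
    classical
    set S : Finset (Fin P ×ₗ Fin K) :=
      Finset.univ.filter (fun x => (ofLex x).2 ∈ f (ofLex x).1) with hS
    have hSmem : ∀ x : Fin P ×ₗ Fin K, x ∈ S ↔ (ofLex x).2 ∈ f (ofLex x).1 := by
      intro x; simp [hS]
    have hSne : S.Nonempty := by
      obtain ⟨p, hp⟩ := hcov ⟨0, hK⟩
      exact ⟨toLex (p, ⟨0, hK⟩), (hSmem _).2 hp⟩
    set N := S.card with hNdef
    have hN : 1 ≤ N := Finset.card_pos.2 hSne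
    set e := S.orderIsoOfFin rfl with he
    refine ⟨N, hN, fun i => (ofLex (e i : Fin P ×ₗ Fin K)).2,
      fun i => (ofLex (e i : Fin P ×ₗ Fin K)).1, ?_, ?_, ?_, ?_⟩
    · -- Monotone t
      intro i j hij
      have hle : (e i : Fin P ×ₗ Fin K) ≤ e j := e.monotone hij
      rcases Prod.Lex.le_iff.1 hle with h | ⟨h1, h2⟩
      · -- fst lt : use (ii)
        have hki := (hSmem _).1 (e i).2
        have hkj := (hSmem _).1 (e j).2
        calc (ofLex (e i : Fin P ×ₗ Fin K)).2
            ≤ (f _).max' ⟨_, hki⟩ := Finset.le_max' _ _ hki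
          _ ≤ (f _).min' ⟨_, hkj⟩ := hii _ _ ⟨_, hki⟩ ⟨_, hkj⟩ h
          _ ≤ _ := Finset.min'_le _ _ hkj
      · exact h2
    · -- Surjective t
      intro k
      obtain ⟨p, hp⟩ := hcov k
      have hx : toLex (p, k) ∈ S := (hSmem _).2 hp
      obtain ⟨i, hi'⟩ := e.surjective ⟨toLex (p, k), hx⟩
      exact ⟨i, by simp only [hi']; rfl⟩
    · -- Monotone pr
      intro i j hij
      have hle : (e i : Fin P ×ₗ Fin K) ≤ e j := e.monotone hij
      rcases Prod.Lex.le_iff.1 hle with h | ⟨h1, h2⟩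
      · exact h.le
      · exact le_of_eq h1
    · -- f p = image
      intro p
      ext k
      simp only [Finset.mem_image, Finset.mem_filter, Finset.mem_univ, true_and]
      constructor
      · intro hk
        have hx : toLex (p, k) ∈ S := (hSmem _).2 hk
        obtain ⟨i, hi'⟩ := e.surjective ⟨toLex (p, k), hx⟩
        exact ⟨i, by simp only [hi']; rfl, by simp only [hi']; rfl⟩
      · rintro ⟨i, hip, hik⟩
        have := (hSmem _).1 (e i).2
        rw [hip, hik] at this
        exact this

/-- Characterization of valid partitions by the three properties (i)–(iii). -/
theorem validPartition_iff (K P : ℕ) (hK : 1 ≤ K) (hP : 1 ≤ P)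
    (f : Fin P → Finset (Fin K)) (hcov : ∀ k : Fin K, ∃ p, k ∈ f p) :
    ValidPartition K P f ↔
      ((∀ p (h : (f p).Nonempty),
          f p = Finset.Icc ((f p).min' h) ((f p).max' h)) ∧
       (∀ p q (hp : (f p).Nonempty) (hq : (f q).Nonempty),
          p < q → (f p).max' hp ≤ (f q).min' hq) ∧
       (∀ p q : Fin P, p ≠ q → ∀ k (hk : k ∈ f p), k ∈ f q →
          k = (f p).min' ⟨k, hk⟩ ∨ k = (f p).max' ⟨k, hk⟩)) := by
  exact validPartition_iff_aux' K P hK hP f hcov
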